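/- Let L be a list assignment on a path P with vertices v₁,…,vₙ where n is odd and |L(vᵢ)| = 4m for all i. Define Λ = ∩ᵢ L(vᵢ), X̂₁ = {c ∈ L(v₁) \ Λ : the smallest i with c ∉ L(vᵢ) is even}, and X̂ₙ = {c ∈ L(vₙ) \ Λ : the largest i with c ∉ L(vᵢ) is even}. Then S_L(P) ≥ max(2(n−1)m + |X̂₁| + |X̂ₙ| + |Λ|, 2(n+1)m), where S_L(P) = Σᵢ |Xᵢ| with X₁ = L(v₁) and Xᵢ = L(vᵢ) \ Xᵢ₋₁. -/

import Mathlib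

open Classical

/-- The greedy sets: `X₁ = L(v₁)`, `Xᵢ = L(vᵢ) \ Xᵢ₋₁` (vertices indexed `1,…,n`). -/
def Xs (L : ℕ → Finset ℕ) : ℕ → Finset ℕ
  | 0 => ∅
  | i + 1 => L (i + 1) \ Xs L i

/-- `S_L(P) = Σ_{i=1}^n |Xᵢ|`. -/
def SL (L : ℕ → Finset ℕ) (n : ℕ) : ℕ := ∑ i ∈ Finset.Icc 1 n, (Xs L i).card

/-- `Λ = ∩_{i=1}^n L(vᵢ)`. -/
noncomputable def lam (L : ℕ → Finset ℕ) (n : ℕ) : Finset ℕ :=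
  (L 1).filter (fun c => ∀ i ∈ Finset.Icc 1 n, c ∈ L i)

/-- `X̂₁`: colours of `L(v₁) \ Λ` whose smallest index of absence is even. -/
noncomputable def hatX1 (L : ℕ → Finset ℕ) (n : ℕ) : Finset ℕ :=
  (L 1 \ lam L n).filter (fun c =>
    ∃ i ∈ Finset.Icc 1 n, c ∉ L i ∧ Even i ∧ ∀ j ∈ Finset.Icc 1 n, j < i → c ∈ L j)

/-- `X̂ₙ`: colours of `L(vₙ) \ Λ` whose largest index of absence is even. -/
noncomputable def hatXn (L : ℕ → Finset ℕ) (n : ℕ) : Finset ℕ :=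
  (L n \ lam L n).filter (fun c =>
    ∃ i ∈ Finset.Icc 1 n, c ∉ L i ∧ Even i ∧ ∀ j ∈ Finset.Icc 1 n, i < j → c ∈ L j)

/- ### Auxiliary lemmas -/

lemma mem_Xs_succ {L : ℕ → Finset ℕ} {i c : ℕ} :
    c ∈ Xs L (i+1) ↔ c ∈ L (i+1) ∧ c ∉ Xs L i := by
  simp [Xs]

lemma Xs_subset_L {L : ℕ → Finset ℕ} {i : ℕ} (hi : 1 ≤ i) : Xs L i ⊆ L i := by
  obtain ⟨j, rfl⟩ : ∃ j, i = j + 1 := ⟨i - 1, by omega⟩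
  exact Finset.sdiff_subset

lemma L_subset_Xs_union {L : ℕ → Finset ℕ} (i : ℕ) :
    L (i+1) ⊆ Xs L i ∪ Xs L (i+1) := by
  intro c hc
  by_cases h : c ∈ Xs L i
  · exact Finset.mem_union_left _ h
  · exact Finset.mem_union_right _ (mem_Xs_succ.2 ⟨hc, h⟩)

/-- If `c` is not in `X_{i₀}` and is present in all lists on `(i₀, i₀+2d+1]`,
then `c ∈ X_{i₀+2d+1}` (alternation). -/
lemma tail_mem {L : ℕ → Finset ℕ} {c i₀ : ℕ} (h0 : c ∉ Xs L i₀) (d : ℕ)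
    (hL : ∀ j, i₀ < j → j ≤ i₀ + 2*d + 1 → c ∈ L j) :
    c ∈ Xs L (i₀ + 2*d + 1) := by
  induction d with
  | zero =>
    have h1 : c ∈ L (i₀ + 1) := hL _ (by omega) (by omega)
    have : c ∈ Xs L (i₀ + 1) := mem_Xs_succ.2 ⟨h1, h0⟩
    simpa using this
  | succ d ih =>
    have hX : c ∈ Xs L (i₀ + 2*d + 1) := ih (fun j h1 h2 => hL j h1 (by omega))
    have h2 : c ∉ Xs L (i₀ + 2*d + 2) := by
      have : i₀ + 2*d + 2 = (i₀ + 2*d + 1) + 1 := by omega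
      rw [this, mem_Xs_succ]
      push_neg
      intro _
      exact hX
    have h3 : c ∈ L ((i₀ + 2*d + 2) + 1) := hL _ (by omega) (by omega)
    have h4 : c ∈ Xs L ((i₀ + 2*d + 2) + 1) := mem_Xs_succ.2 ⟨h3, h2⟩
    have he : i₀ + 2*(d+1) + 1 = (i₀ + 2*d + 2) + 1 := by omega
    rw [he]
    exact h4

lemma sum_pair (g : ℕ → ℕ) (k : ℕ) :
    ∑ i ∈ Finset.Icc 1 (2*k), g i = ∑ j ∈ Finset.Icc 1 k, (g (2*j-1) + g (2*j)) := by
  induction k with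
  | zero => simp
  | succ k ih =>
    have h1 : 2*(k+1) = (2*k+1)+1 := by ring
    rw [h1, Finset.sum_Icc_succ_top (by omega), Finset.sum_Icc_succ_top (by omega),
      Finset.sum_Icc_succ_top (by omega : (1:ℕ) ≤ k + 1), ih]
    have e1 : 2*(k+1)-1 = 2*k+1 := by omega
    have e2 : 2*(k+1) = 2*k+1+1 := by omega
    rw [e1, e2]
    ring

lemma sum_pair' (g : ℕ → ℕ) (k : ℕ) :
    ∑ i ∈ Finset.Icc 1 (2*k+1), g i = g 1 + ∑ j ∈ Finset.Icc 1 k, (g (2*j) + g (2*j+1)) := by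
  induction k with
  | zero => simp
  | succ k ih =>
    have h1 : 2*(k+1)+1 = (2*k+1+1)+1 := by ring
    rw [h1, Finset.sum_Icc_succ_top (by omega), Finset.sum_Icc_succ_top (by omega),
      Finset.sum_Icc_succ_top (by omega : (1:ℕ) ≤ k + 1), ih]
    have e1 : 2*(k+1) = 2*k+1+1 := by omega
    have e3 : 2*k+2+1 = 2*k+1+1+1 := by omega
    rw [e1, e3]
    ring

/-- First index of absence of a colour. -/
noncomputable def fa (L : ℕ → Finset ℕ) (n c : ℕ) : ℕ :=
  if h : ∃ i, 1 ≤ i ∧ i ≤ n ∧ c ∉ L i then Nat.find h else 0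

lemma hatX1_wit {L : ℕ → Finset ℕ} {n c : ℕ} (hc : c ∈ hatX1 L n) :
    1 ≤ fa L n c ∧ fa L n c ≤ n ∧ c ∉ L (fa L n c) ∧ Even (fa L n c) ∧
      ∀ j, 1 ≤ j → j ≤ n → j < fa L n c → c ∈ L j := by
  simp only [hatX1, Finset.mem_filter, Finset.mem_Icc] at hc
  obtain ⟨-, i, ⟨hi1, hi2⟩, hnot, heven, hmin⟩ := hc
  have h : ∃ i, 1 ≤ i ∧ i ≤ n ∧ c ∉ L i := ⟨i, hi1, hi2, hnot⟩
  have hfa : fa L n c = i := by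
    rw [fa, dif_pos h]
    have h1 := Nat.find_spec h
    have h2 : Nat.find h ≤ i := Nat.find_le ⟨hi1, hi2, hnot⟩
    rcases lt_or_eq_of_le h2 with hlt | he
    · exact absurd (hmin _ ⟨h1.1, h1.2.1⟩ hlt) h1.2.2
    · exact he
  rw [hfa]
  exact ⟨hi1, hi2, hnot, heven, fun j hj1 hj2 hj3 => hmin j ⟨hj1, hj2⟩ hj3⟩

lemma hatXn_subset_Xn {L : ℕ → Finset ℕ} {k : ℕ} :
    hatXn L (2*k+1) ⊆ Xs L (2*k+1) := by
  intro c hc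
  simp only [hatXn, Finset.mem_filter] at hc
  obtain ⟨i, hi, hnot, heven, hmax⟩ := hc.2
  rw [Finset.mem_Icc] at hi
  obtain ⟨r, hr⟩ := heven
  have hile : i ≤ 2*k := by omega
  have h0 : c ∉ Xs L i := fun h => hnot (Xs_subset_L (by omega) h)
  have hd : 2*k+1 = i + 2*(k - r) + 1 := by omega
  rw [hd]
  refine tail_mem h0 (k - r) ?_
  intro j hj1 hj2
  exact hmax j (Finset.mem_Icc.2 ⟨by omega, by omega⟩) hj1

lemma lam_subset_Xn {L : ℕ → Finset ℕ} {k : ℕ} :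
    lam L (2*k+1) ⊆ Xs L (2*k+1) := by
  intro c hc
  simp only [lam, Finset.mem_filter] at hc
  have h0 : c ∉ Xs L 0 := by simp [Xs]
  have hd : 2*k+1 = 0 + 2*k + 1 := by omega
  rw [hd]
  refine tail_mem h0 k ?_
  intro j hj1 hj2
  exact hc.2 j (Finset.mem_Icc.2 ⟨by omega, by omega⟩)

theorem stmt_9 (n m : ℕ) (hn : Odd n) (L : ℕ → Finset ℕ)
    (hcard : ∀ i, 1 ≤ i → i ≤ n → (L i).card = 4 * m) :
    max (2 * (n - 1) * m + (hatX1 L n).card + (hatXn L n).card + (lam L n).card)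
        (2 * (n + 1) * m) ≤ SL L n := by
  obtain ⟨k, hk⟩ := hn
  subst hk
  have hIcc : (Finset.Icc 1 k).card = k := by simp
  -- pair bound for consecutive X's
  have pair_bound : ∀ i : ℕ, (L (i+1)).card ≤ (Xs L i).card + (Xs L (i+1)).card := by
    intro i
    calc (L (i+1)).card ≤ (Xs L i ∪ Xs L (i+1)).card :=
          Finset.card_le_card (L_subset_Xs_union i)
      _ ≤ (Xs L i).card + (Xs L (i+1)).card := Finset.card_union_le _ _
  -- Second bound: 2(n+1)m ≤ SL
  have bound2 : 2 * (2*k+1 + 1) * m ≤ SL L (2*k+1) := by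
    rw [SL, sum_pair' (fun i => (Xs L i).card) k]
    have h1 : (Xs L 1).card = 4 * m := by
      have : Xs L 1 = L 1 := by simp [Xs]
      rw [this]
      exact hcard 1 le_rfl (by omega)
    have h2 : ∀ j ∈ Finset.Icc 1 k, 4 * m ≤ (Xs L (2*j)).card + (Xs L (2*j+1)).card := by
      intro j hj
      rw [Finset.mem_Icc] at hj
      have := pair_bound (2*j)
      have hc := hcard (2*j+1) (by omega) (by omega)
      omega
    have h3 : k * (4 * m) ≤ ∑ j ∈ Finset.Icc 1 k, ((Xs L (2*j)).card + (Xs L (2*j+1)).card) := by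
      calc k * (4*m) = ∑ _j ∈ Finset.Icc 1 k, 4 * m := by
            rw [Finset.sum_const, hIcc, smul_eq_mul]
        _ ≤ _ := Finset.sum_le_sum h2
    calc 2 * (2*k+1+1) * m = 4 * m + k * (4 * m) := by ring
      _ ≤ (Xs L 1).card + ∑ j ∈ Finset.Icc 1 k, ((Xs L (2*j)).card + (Xs L (2*j+1)).card) := by
          rw [h1]; exact Nat.add_le_add_left h3 _
  -- First bound
  have bound1 : 2 * (2*k+1 - 1) * m + (hatX1 L (2*k+1)).card + (hatXn L (2*k+1)).card
      + (lam L (2*k+1)).card ≤ SL L (2*k+1) := by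
    set n := 2*k+1 with hn
    -- |X_n| ≥ |hatXn| + |lam|
    have hxn : (hatXn L n).card + (lam L n).card ≤ (Xs L n).card := by
      have hdisj : Disjoint (hatXn L n) (lam L n) := by
        rw [Finset.disjoint_left]
        intro c hc hc'
        simp only [hatXn, Finset.mem_filter, Finset.mem_sdiff] at hc
        exact hc.1.2 hc'
      have hsub : hatXn L n ∪ lam L n ⊆ Xs L n :=
        Finset.union_subset hatXn_subset_Xn lam_subset_Xn
      calc (hatXn L n).card + (lam L n).card = (hatXn L n ∪ lam L n).card :=
            (Finset.card_union_of_disjoint hdisj).symm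
        _ ≤ (Xs L n).card := Finset.card_le_card hsub
    -- fiberwise decomposition of hatX1
    have hfib : (hatX1 L n).card
        = ∑ j ∈ Finset.Icc 1 k, ((hatX1 L n).filter (fun c => fa L n c / 2 = j)).card := by
      apply Finset.card_eq_sum_card_fiberwise
      intro c hc
      obtain ⟨h1, h2, h3, h4, h5⟩ := hatX1_wit hc
      simp only [Finset.coe_Icc, Set.mem_Icc]
      obtain ⟨r, hr⟩ := h4
      constructor <;> omega
    -- per-block bound
    have hblock : ∀ j ∈ Finset.Icc 1 k,
        4 * m + ((hatX1 L n).filter (fun c => fa L n c / 2 = j)).card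
          ≤ (Xs L (2*j-1)).card + (Xs L (2*j)).card := by
      intro j hj
      rw [Finset.mem_Icc] at hj
      set B := (hatX1 L n).filter (fun c => fa L n c / 2 = j) with hB
      have hBfa : ∀ c ∈ B, fa L n c = 2*j := by
        intro c hc
        rw [hB, Finset.mem_filter] at hc
        obtain ⟨h1, h2, h3, h4, h5⟩ := hatX1_wit hc.1
        obtain ⟨r, hr⟩ := h4
        have := hc.2
        omega
      have hBX : B ⊆ Xs L (2*j-1) := by
        intro c hc
        have hfa := hBfa c hc
        rw [hB, Finset.mem_filter] at hc
        obtain ⟨h1, h2, h3, h4, h5⟩ := hatX1_wit hc.1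
        have h0 : c ∉ Xs L 0 := by simp [Xs]
        have hd : 2*j-1 = 0 + 2*(j-1) + 1 := by omega
        rw [hd]
        refine tail_mem h0 (j-1) ?_
        intro i hi1 hi2
        exact h5 i (by omega) (by omega) (by omega)
      have hBL : Disjoint (L (2*j)) B := by
        rw [Finset.disjoint_right]
        intro c hc
        have hfa := hBfa c hc
        rw [hB, Finset.mem_filter] at hc
        obtain ⟨h1, h2, h3, h4, h5⟩ := hatX1_wit hc.1
        rw [hfa] at h3
        exact h3
      have hsub : L (2*j) ∪ B ⊆ Xs L (2*j-1) ∪ Xs L (2*j) := by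
        apply Finset.union_subset
        · have he : 2*j = (2*j-1) + 1 := by omega
          rw [he]
          exact L_subset_Xs_union (2*j-1)
        · exact hBX.trans Finset.subset_union_left
      have hcL : (L (2*j)).card = 4 * m := hcard (2*j) (by omega) (by omega)
      calc 4 * m + B.card = (L (2*j) ∪ B).card := by
            rw [Finset.card_union_of_disjoint hBL, hcL]
        _ ≤ (Xs L (2*j-1) ∪ Xs L (2*j)).card := Finset.card_le_card hsub
        _ ≤ (Xs L (2*j-1)).card + (Xs L (2*j)).card := Finset.card_union_le _ _
    -- assemble
    have hSL : SL L n = (∑ j ∈ Finset.Icc 1 k,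
        ((Xs L (2*j-1)).card + (Xs L (2*j)).card)) + (Xs L n).card := by
      rw [SL, hn, Finset.sum_Icc_succ_top (by omega : (1:ℕ) ≤ 2*k+1),
        sum_pair (fun i => (Xs L i).card) k]
    have hsplit : ∑ j ∈ Finset.Icc 1 k,
        (4 * m + ((hatX1 L n).filter (fun c => fa L n c / 2 = j)).card)
        = k * (4 * m) + (hatX1 L n).card := by
      rw [Finset.sum_add_distrib, Finset.sum_const, hIcc, smul_eq_mul, hfib]
    have hsum : k * (4 * m) + (hatX1 L n).card
        ≤ ∑ j ∈ Finset.Icc 1 k, ((Xs L (2*j-1)).card + (Xs L (2*j)).card) := by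
      rw [← hsplit]
      exact Finset.sum_le_sum hblock
    have e : 2 * (n - 1) * m = k * (4 * m) := by
      have e0 : n - 1 = 2 * k := by omega
      rw [e0]; ring
    calc 2 * (n-1) * m + (hatX1 L n).card + (hatXn L n).card + (lam L n).card
        = (k * (4*m) + (hatX1 L n).card) + ((hatXn L n).card + (lam L n).card) := by
          rw [e]; ring
      _ ≤ (∑ j ∈ Finset.Icc 1 k, ((Xs L (2*j-1)).card + (Xs L (2*j)).card))
          + (Xs L n).card := Nat.add_le_add hsum hxn
      _ = SL L n := hSL.symm
  exact max_le bound1 bound2
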